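/- Let 0 < τ < 1 be real and A a sequence of length n ≥ 1 over an arbitrary type. Then for every position k ∈ {1, …, n}, the number of distinct values x such that k ∈ Cov_τ(x) is at most 2·log(4n)/log(1+τ). -/

import Mathlib

open scoped Classical

/-- Number of occurrences of `x` in `A[i,j]` (positions `i..j`, 1-based). -/
noncomputable def majCount {α : Type*} (A : ℕ → α) (i j : ℕ) (x : α) : ℕ :=
  ((Finset.Icc i j).filter (fun k => A k = x)).card

/-- `x` is a `τ`-majority in the range `A[i,j]`. -/
def IsMaj {α : Type*} (τ : ℝ) (A : ℕ → α) (i j : ℕ) (x : α) : Prop :=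
  τ * ((j : ℝ) - (i : ℝ) + 1) < (majCount A i j x : ℝ)

/-- `Cov τ A n x`: the set of positions `k ∈ {1,…,n}` lying in at least one interval
`[i,j] ⊆ {1,…,n}` in which `x` is a `τ`-majority. -/
def Cov {α : Type*} (τ : ℝ) (A : ℕ → α) (n : ℕ) (x : α) : Set ℕ :=
  {k | ∃ i j : ℕ, 1 ≤ i ∧ i ≤ j ∧ j ≤ n ∧ i ≤ k ∧ k ≤ j ∧ IsMaj τ A i j x}

/-- For every position `k`, at most `2·log(4n)/log(1+τ)` distinct values `x`
satisfy `k ∈ Cov_τ(x)`. -/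
theorem stmt6 {α : Type*} (τ : ℝ) (hτ0 : 0 < τ) (hτ1 : τ < 1)
    (A : ℕ → α) (n : ℕ) (hn : 1 ≤ n) (k : ℕ) (hk1 : 1 ≤ k) (hkn : k ≤ n) :
    ({x : α | k ∈ Cov τ A n x}.ncard : ℝ) ≤
      2 * Real.log (4 * n) / Real.log (1 + τ) := by
  set Sset : Set α := {x : α | k ∈ Cov τ A n x} with hSset
  -- choose a witness interval for each covered value
  have hall : ∀ x : α, ∃ i j : ℕ, x ∈ Sset →
      (1 ≤ i ∧ i ≤ j ∧ j ≤ n ∧ i ≤ k ∧ k ≤ j ∧ IsMaj τ A i j x) := by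
    intro x
    by_cases hx : x ∈ Sset
    · have hx' : k ∈ Cov τ A n x := hx
      obtain ⟨i, j, h⟩ := hx'
      exact ⟨i, j, fun _ => h⟩
    · exact ⟨k, k, fun h => absurd h hx⟩
  choose I J hIJ using hall
  have hprop : ∀ x ∈ Sset, 1 ≤ I x ∧ I x ≤ J x ∧ J x ≤ n ∧ I x ≤ k ∧ k ≤ J x ∧
      IsMaj τ A (I x) (J x) x := fun x hx => hIJ x hx
  set len : α → ℕ := fun x => J x - I x + 1 with hlen
  set cnt : α → ℕ := fun x => majCount A (I x) (J x) x with hcnt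
  set Sx : α → Finset ℕ := fun x => (Finset.Icc (I x) (J x)).filter (fun p => A p = x)
    with hSxdef
  have hcntSx : ∀ x, cnt x = (Sx x).card := fun x => rfl
  -- basic facts
  have len_cast : ∀ x ∈ Sset, ((len x : ℕ) : ℝ) = (J x : ℝ) - (I x : ℝ) + 1 := by
    intro x hx
    have h := (hprop x hx).2.1
    simp only [hlen]
    rw [Nat.cast_add, Nat.cast_sub h, Nat.cast_one]
  have cnt_ge : ∀ x ∈ Sset, τ * ((len x : ℕ) : ℝ) < (cnt x : ℝ) := by
    intro x hx
    have h := (hprop x hx).2.2.2.2.2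
    rw [IsMaj] at h
    rw [len_cast x hx]
    exact h
  have cnt_pos : ∀ x ∈ Sset, 1 ≤ cnt x := by
    intro x hx
    have h := cnt_ge x hx
    have hl : (1 : ℝ) ≤ ((len x : ℕ) : ℝ) := by
      have : 1 ≤ len x := by simp [hlen]
      exact_mod_cast this
    have h0 : (0 : ℝ) < (cnt x : ℝ) := lt_of_le_of_lt (by nlinarith) h
    exact_mod_cast Nat.cast_pos.mp h0
  -- Claim A : the packing bound
  have claimA : ∀ (L : ℕ), 1 ≤ L → ∀ F : Finset α, (∀ x ∈ F, x ∈ Sset) →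
      (∀ x ∈ F, len x ≤ L) → ∑ x ∈ F, cnt x ≤ 2 * L - 1 := by
    intro L hL F hF hlenF
    have hdisj : ∀ x ∈ F, ∀ y ∈ F, x ≠ y → Disjoint (Sx x) (Sx y) := by
      intro x _ y _ hxy
      rw [Finset.disjoint_left]
      intro p hpx hpy
      simp only [hSxdef, Finset.mem_filter] at hpx hpy
      exact hxy (hpx.2.symm.trans hpy.2)
    have hsub : ∀ x ∈ F, Sx x ⊆ Finset.Icc (k + 1 - L) (k + 1 - L + (2 * L - 2)) := by
      intro x hx p hp
      obtain ⟨h1, h2, h3, h4, h5, _⟩ := hprop x (hF x hx)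
      simp only [hSxdef, Finset.mem_filter, Finset.mem_Icc] at hp
      obtain ⟨⟨hp1, hp2⟩, _⟩ := hp
      have h6 := hlenF x hx
      simp only [hlen] at h6
      rw [Finset.mem_Icc]
      omega
    calc ∑ x ∈ F, cnt x = ∑ x ∈ F, (Sx x).card :=
          Finset.sum_congr rfl (fun x _ => hcntSx x)
      _ = (F.biUnion Sx).card := (Finset.card_biUnion hdisj).symm
      _ ≤ (Finset.Icc (k + 1 - L) (k + 1 - L + (2 * L - 2))).card :=
          Finset.card_le_card (Finset.biUnion_subset.2 hsub)
      _ = 2 * L - 1 := by rw [Nat.card_Icc]; omega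
  -- Claim B : geometric growth
  have claimB : ∀ m : ℕ, ∀ F : Finset α, (∀ x ∈ F, x ∈ Sset) → F.card = m + 1 →
      (1 + τ / 2) ^ m ≤ ∑ x ∈ F, (cnt x : ℝ) := by
    intro m
    induction m with
    | zero =>
      intro F hF hcard
      obtain ⟨x, hx⟩ := Finset.card_eq_one.mp hcard
      subst hx
      rw [Finset.sum_singleton, pow_zero]
      have := cnt_pos x (hF x (Finset.mem_singleton_self x))
      exact_mod_cast this
    | succ m ih =>
      intro F hF hcard
      have hne : F.Nonempty := Finset.card_pos.mp (by omega)
      obtain ⟨x, hxF, hxmax⟩ := Finset.exists_max_image F len hne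
      have hxS := hF x hxF
      set F' := F.erase x with hF'def
      have hF'card : F'.card = m + 1 := by
        rw [hF'def, Finset.card_erase_of_mem hxF]; omega
      have hF'S : ∀ y ∈ F', y ∈ Sset := fun y hy => hF y (Finset.mem_of_mem_erase hy)
      have hIH := ih F' hF'S hF'card
      have hlenx : 1 ≤ len x := by simp [hlen]
      have hA := claimA (len x) hlenx F' hF'S
        (fun y hy => hxmax y (Finset.mem_of_mem_erase hy))
      have hAn : ∑ y ∈ F', cnt y ≤ 2 * len x := le_trans hA (Nat.sub_le _ _)
      have hAR : ∑ y ∈ F', (cnt y : ℝ) ≤ 2 * ((len x : ℕ) : ℝ) := by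
        have h := (Nat.cast_le (α := ℝ)).2 hAn
        push_cast at h
        rw [len_cast x hxS] at h
        rw [len_cast x hxS]
        linarith
      have hcntx : τ * ((len x : ℕ) : ℝ) ≤ (cnt x : ℝ) := le_of_lt (cnt_ge x hxS)
      have hsum : ∑ y ∈ F, (cnt y : ℝ) = (cnt x : ℝ) + ∑ y ∈ F', (cnt y : ℝ) :=
        (Finset.add_sum_erase F _ hxF).symm
      have hpow : (0 : ℝ) < (1 + τ / 2) ^ m := by positivity
      calc (1 + τ / 2) ^ (m + 1) = (1 + τ / 2) * (1 + τ / 2) ^ m := by ring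
        _ ≤ (1 + τ / 2) * ∑ y ∈ F', (cnt y : ℝ) := by nlinarith
        _ = ∑ y ∈ F', (cnt y : ℝ) + (τ / 2) * ∑ y ∈ F', (cnt y : ℝ) := by ring
        _ ≤ ∑ y ∈ F', (cnt y : ℝ) + (cnt x : ℝ) := by nlinarith
        _ = ∑ y ∈ F, (cnt y : ℝ) := by rw [hsum]; ring
  -- Finiteness
  have hfin : Sset.Finite := by
    apply Set.Finite.subset ((Set.finite_Icc 1 n).image A)
    intro x hx
    obtain ⟨h1, h2, h3, _, _, _⟩ := hprop x hx
    have hne : (Sx x).Nonempty := Finset.card_pos.mp (by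
      rw [← hcntSx]; exact cnt_pos x hx)
    obtain ⟨p, hp⟩ := hne
    simp only [hSxdef, Finset.mem_filter, Finset.mem_Icc] at hp
    exact ⟨p, Set.mem_Icc.2 ⟨le_trans h1 hp.1.1, le_trans hp.1.2 h3⟩, hp.2⟩
  have hncard : Sset.ncard = hfin.toFinset.card := Set.ncard_eq_toFinset_card Sset hfin
  set F := hfin.toFinset with hFdef
  have hFS : ∀ x ∈ F, x ∈ Sset := fun x hx => hfin.mem_toFinset.mp hx
  have hlogτ : 0 < Real.log (1 + τ) := Real.log_pos (by linarith)
  have hlog4n : 0 ≤ Real.log (4 * n) := Real.log_nonneg (by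
    have : (1 : ℝ) ≤ (n : ℝ) := by exact_mod_cast hn
    linarith)
  rcases Nat.eq_zero_or_pos F.card with h0 | hpos
  · rw [hncard, h0]
    push_cast
    positivity
  · obtain ⟨m, hm⟩ : ∃ m, F.card = m + 1 := ⟨F.card - 1, by omega⟩
    have hB := claimB m F hFS hm
    have hlenn : ∀ x ∈ F, len x ≤ n := by
      intro x hx
      obtain ⟨h1, h2, h3, _, _, _⟩ := hprop x (hFS x hx)
      simp only [hlen]
      omega
    have hA := claimA n hn F hFS hlenn
    have hAn : ∑ x ∈ F, cnt x ≤ 2 * n := le_trans hA (Nat.sub_le _ _)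
    have key : (1 + τ / 2) ^ m ≤ 2 * (n : ℝ) := by
      refine le_trans hB ?_
      have h := (Nat.cast_le (α := ℝ)).2 hAn
      push_cast at h
      exact h
    have hτ2 : (1 : ℝ) < 1 + τ / 2 := by linarith
    have hlog2' : 0 < Real.log (1 + τ / 2) := Real.log_pos hτ2
    have h1 : (m : ℝ) * Real.log (1 + τ / 2) ≤ Real.log (2 * n) := by
      rw [← Real.log_pow]
      exact Real.log_le_log (by positivity) key
    have h2 : Real.log (1 + τ) ≤ 2 * Real.log (1 + τ / 2) := by
      have hle : (1 : ℝ) + τ ≤ (1 + τ / 2) ^ 2 := by nlinarith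
      calc Real.log (1 + τ) ≤ Real.log ((1 + τ / 2) ^ 2) :=
            Real.log_le_log (by linarith) hle
        _ = 2 * Real.log (1 + τ / 2) := by
            rw [Real.log_pow]; push_cast; ring
    have h3 : Real.log (1 + τ) ≤ Real.log 2 :=
      Real.log_le_log (by linarith) (by linarith)
    have hn1 : (1 : ℝ) ≤ (n : ℝ) := by exact_mod_cast hn
    have h4 : Real.log (4 * n) = Real.log 2 + Real.log (2 * n) := by
      rw [← Real.log_mul (by norm_num) (by positivity)]
      ring_nf
    have hlog2pos : 0 ≤ Real.log 2 := Real.log_nonneg one_le_two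
    have h5 : (m : ℝ) * Real.log (1 + τ) ≤ 2 * Real.log (2 * n) := by
      nlinarith [mul_nonneg (Nat.cast_nonneg m : (0 : ℝ) ≤ (m : ℝ))
        (sub_nonneg.2 h2), h1]
    rw [hncard, hm, le_div_iff₀ hlogτ]
    push_cast
    linarith
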